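/- Let T be a collection of histories and let t ∈ D(T) be a history in the history sDAG (V,E) constructed from T. Then there exist a finite sequence of histories t₁, …, t_n ∈ T and, for each i, a subhistory sᵢ of tᵢ, such that t = t₁ ◁ s₁ ◁ ⋯ ◁ s_n. -/

import Mathlib

universe u v

/-- A node of a history sDAG: either the universal ancestor (UA) node `ρ`,
or a node carrying a label `ℓ : Y` and a subpartition `U : Set (Set Y)`. -/
inductive HNode (Y : Type u) : Type u
  | ua : HNode Y
  | node : Y → Set (Set Y) → HNode Y

namespace HistorySDAGs

variable {Y : Type u}

/-- `U ∈ Part(Y)`: `U` is a set of pairwise disjoint nonempty (finite) clades with `|U| ≠ 1`. -/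
def IsPart (U : Set (Set Y)) : Prop :=
  (∀ C ∈ U, C ≠ ∅) ∧
  (∀ C₁ ∈ U, ∀ C₂ ∈ U, C₁ ≠ C₂ → Disjoint C₁ C₂) ∧
  (∀ C, U ≠ {C}) ∧
  U.Finite ∧ ∀ C ∈ U, C.Finite

open Classical in
/-- The clade union of a node. -/
noncomputable def cladeUnion : HNode Y → Set Y
  | HNode.ua => ∅
  | HNode.node ℓ U => if U = ∅ then {ℓ} else ⋃₀ U

/-- Reachability via directed edges in `E`. -/
def Reach (E : Set (HNode Y × HNode Y)) (a b : HNode Y) : Prop :=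
  Relation.ReflTransGen (fun x y => (x, y) ∈ E) a b

/-- `(V, E)` is a history sDAG on labels `Y`. -/
structure IsHSDAG (V : Set (HNode Y)) (E : Set (HNode Y × HNode Y)) : Prop where
  ua_mem : HNode.ua ∈ V
  valid : ∀ ℓ U, HNode.node ℓ U ∈ V → IsPart U
  edge_mem : ∀ e ∈ E, e.1 ∈ V ∧ e.2 ∈ V
  reach_ua : ∀ v ∈ V, Reach E HNode.ua v
  no_in_ua : ∀ v : HNode Y, (v, HNode.ua) ∉ E
  edge_clade : ∀ ℓ U v, (HNode.node ℓ U, v) ∈ E → cladeUnion v ∈ U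
  clade_cov : ∀ ℓ U, HNode.node ℓ U ∈ V → ∀ C ∈ U,
      ∃ v, (HNode.node ℓ U, v) ∈ E ∧ cladeUnion v = C

/-- Every node-clade pair of `V` has exactly one descendant edge in `E`. -/
def UniqueDesc (V : Set (HNode Y)) (E : Set (HNode Y × HNode Y)) : Prop :=
  ∀ ℓ U, HNode.node ℓ U ∈ V → ∀ C ∈ U,
    ∃! vc, (HNode.node ℓ U, vc) ∈ E ∧ cladeUnion vc = C

/-- `(V, E)` is a history: a history sDAG in which `ρ` has exactly one child and
each node-clade pair has exactly one descendant edge. -/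
def IsHistory (V : Set (HNode Y)) (E : Set (HNode Y × HNode Y)) : Prop :=
  IsHSDAG V E ∧ (∃! v, (HNode.ua, v) ∈ E) ∧ UniqueDesc V E

/-- `(Vs, Es)` is a subhistory of `(V, E)` with root node `vr`. -/
structure IsSubhistoryRooted (V : Set (HNode Y)) (E : Set (HNode Y × HNode Y))
    (Vs : Set (HNode Y)) (Es : Set (HNode Y × HNode Y)) (vr : HNode Y) : Prop where
  subV : Vs ⊆ V
  subE : Es ⊆ E
  ua_not_mem : HNode.ua ∉ Vs
  edge_mem : ∀ e ∈ Es, e.1 ∈ Vs ∧ e.2 ∈ Vs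
  root_mem : vr ∈ Vs
  reach_root : ∀ v ∈ Vs, Reach Es vr v
  unique_desc : ∀ ℓ U, HNode.node ℓ U ∈ Vs → ∀ C ∈ U,
      ∃! vc, (HNode.node ℓ U, vc) ∈ Es ∧ cladeUnion vc = C

/-- `(Vs, Es)` is a subhistory of `(V, E)`. -/
def IsSubhistory (V : Set (HNode Y)) (E : Set (HNode Y × HNode Y))
    (Vs : Set (HNode Y)) (Es : Set (HNode Y × HNode Y)) : Prop :=
  ∃ vr, IsSubhistoryRooted V E Vs Es vr

/-- `(Vt, Et)` is a history in (a trim of) the history sDAG `(V, E)`. -/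
def HistoryIn (V : Set (HNode Y)) (E : Set (HNode Y × HNode Y))
    (Vt : Set (HNode Y)) (Et : Set (HNode Y × HNode Y)) : Prop :=
  Vt ⊆ V ∧ Et ⊆ E ∧ IsHistory Vt Et

/-- The set of labels of leaf nodes in a node set. -/
def leafLabels (Vt : Set (HNode Y)) : Set Y := {ℓ | HNode.node ℓ ∅ ∈ Vt}

/-- A candidate history/graph: a pair of a node set and an edge set. -/
abbrev Hist (Y : Type u) := Set (HNode Y) × Set (HNode Y × HNode Y)

/-- The node set of the history sDAG constructed from the collection `T`. -/
def unionV (T : Set (Hist Y)) : Set (HNode Y) := ⋃ t ∈ T, t.1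

/-- The edge set of the history sDAG constructed from the collection `T`. -/
def unionE (T : Set (Hist Y)) : Set (HNode Y × HNode Y) := ⋃ t ∈ T, t.2

/-- The node set of the complete history sDAG on labels `Y`. -/
def completeV (Y : Type u) : Set (HNode Y) :=
  {v | v = HNode.ua ∨ ∃ ℓ U, v = HNode.node ℓ U ∧ IsPart U}

/-- The edge set of the complete history sDAG on labels `Y`. -/
def completeE (Y : Type u) : Set (HNode Y × HNode Y) :=
  {e | e.1 ∈ completeV Y ∧ e.2 ∈ completeV Y ∧ e.2 ≠ HNode.ua ∧
    (e.1 = HNode.ua ∨ ∃ ℓ U, e.1 = HNode.node ℓ U ∧ cladeUnion e.2 ∈ U)}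

variable {W : Type v}

/-- The weight `g_f` of a subgraph with edge set `Es`: the sum of `f` over all edges. -/
noncomputable def gweight [AddCommMonoid W] (f : HNode Y × HNode Y → W)
    (Es : Set (HNode Y × HNode Y)) : W := ∑ᶠ e ∈ Es, f e

/-- The order is total on the subset `S` of `W`. -/
def TotalOn [PartialOrder W] (S : Set W) : Prop := ∀ a ∈ S, ∀ b ∈ S, a ≤ b ∨ b ≤ a

/-- The order respects addition on the subset `S` of `W`. -/
def RespectsAdd [AddCommMonoid W] [PartialOrder W] (S : Set W) : Prop :=
  ∀ a ∈ S, ∀ b ∈ S, ∀ c : W, a < b ↔ a + c < b + c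

/-- Weights of subhistories of `(V, E)` rooted at `v`. -/
def subWeights [AddCommMonoid W] (f : HNode Y × HNode Y → W)
    (V : Set (HNode Y)) (E : Set (HNode Y × HNode Y)) (v : HNode Y) : Set W :=
  {w | ∃ Vs Es, IsSubhistoryRooted V E Vs Es v ∧ w = gweight f Es}

/-- Weights of augmented subhistories below the node-clade pair `(v, C)`. -/
def augWeights [AddCommMonoid W] (f : HNode Y × HNode Y → W)
    (V : Set (HNode Y)) (E : Set (HNode Y × HNode Y)) (v : HNode Y) (C : Set Y) : Set W :=
  {w | ∃ vc Vs Es, (v, vc) ∈ E ∧ cladeUnion vc = C ∧ IsSubhistoryRooted V E Vs Es vc ∧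
    w = gweight f (insert (v, vc) Es)}

/-- Weights of histories in `(V, E)`. -/
def historyWeights [AddCommMonoid W] (f : HNode Y × HNode Y → W)
    (V : Set (HNode Y)) (E : Set (HNode Y × HNode Y)) : Set W :=
  {w | ∃ Vt Et, HistoryIn V E Vt Et ∧ w = gweight f Et}

/-- `W` is clade-ordered with respect to `f` and `(V, E)`. -/
def CladeOrdered [AddCommMonoid W] [PartialOrder W] (f : HNode Y × HNode Y → W)
    (V : Set (HNode Y)) (E : Set (HNode Y × HNode Y)) : Prop :=
  (∀ v ∈ V, v ≠ HNode.ua →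
      TotalOn (subWeights f V E v) ∧ RespectsAdd (subWeights f V E v)) ∧
  (∀ ℓ U, HNode.node ℓ U ∈ V → ∀ C ∈ U,
      TotalOn (augWeights f V E (HNode.node ℓ U) C) ∧
      RespectsAdd (augWeights f V E (HNode.node ℓ U) C)) ∧
  TotalOn (historyWeights f V E)

/-- The minimum-weight histories in `(V, E)` with respect to `g_f`. -/
def minHistories [AddCommMonoid W] [PartialOrder W] (f : HNode Y × HNode Y → W)
    (V : Set (HNode Y)) (E : Set (HNode Y × HNode Y)) : Set (Hist Y) :=
  {t | HistoryIn V E t.1 t.2 ∧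
    ∀ t' : Hist Y, HistoryIn V E t'.1 t'.2 → gweight f t.2 ≤ gweight f t'.2}

open Classical in
/-- The map `q` collapsing the edge `(vp, vc)`, sending both `vp` and `vc` to `vp'`. -/
noncomputable def collapseMap (vp vc vp' : HNode Y) (v : HNode Y) : HNode Y :=
  if v = vp ∨ v = vc then vp' else v

/-- The history obtained by collapsing the edge `(vp, vc)` (into `vp'`) in `t`. -/
noncomputable def collapseEdgeHist (vp vc vp' : HNode Y) (t : Hist Y) : Hist Y :=
  (collapseMap vp vc vp' '' t.1,
   (fun e : HNode Y × HNode Y => (collapseMap vp vc vp' e.1, collapseMap vp vc vp' e.2)) ''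
     (t.2 \ {(vp, vc)}))

/-- The new parent node `(ℓ_p, (U_p ∪ U_c) \ {CU(v_c)})` formed when collapsing an edge. -/
noncomputable def newParent : HNode Y → HNode Y → HNode Y
  | HNode.node ℓp Up, HNode.node ℓc Uc =>
      HNode.node ℓp ((Up ∪ Uc) \ {cladeUnion (HNode.node ℓc Uc)})
  | v, _ => v

/-- `t'` results from `t` by collapsing one label-collapsible edge. -/
def LabelCollapseStep (t t' : Hist Y) : Prop :=
  ∃ ℓ Up Uc, (HNode.node ℓ Up, HNode.node ℓ Uc) ∈ t.2 ∧ Uc ≠ ∅ ∧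
    t' = collapseEdgeHist (HNode.node ℓ Up) (HNode.node ℓ Uc)
        (newParent (HNode.node ℓ Up) (HNode.node ℓ Uc)) t

/-- `t` is label-collapsed: it has no label-collapsible edge. -/
def LabelCollapsed (t : Hist Y) : Prop :=
  ∀ ℓ Up Uc, (HNode.node ℓ Up, HNode.node ℓ Uc) ∈ t.2 → Uc = ∅

/-- `(vp, vc)` is a label-collapsible edge of `G`. -/
def LabelCollapsibleEdge (G : Hist Y) (vp vc : HNode Y) : Prop :=
  (vp, vc) ∈ G.2 ∧ ∃ ℓ Up Uc, vp = HNode.node ℓ Up ∧ vc = HNode.node ℓ Uc ∧ Uc ≠ ∅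

/-- `T` is a label-collapsible edge cover of `G`. -/
def LabelCollapsibleEdgeCover (G : Hist Y) (T : Set (Hist Y)) : Prop :=
  (∀ t ∈ T, HistoryIn G.1 G.2 t.1 t.2) ∧
  (∀ e ∈ G.2, ∃ t ∈ T, e ∈ t.2) ∧
  (∀ vp vc, LabelCollapsibleEdge G vp vc →
    ∀ Vs Es, IsSubhistory G.1 G.2 Vs Es → (vp, vc) ∈ Es →
      ∃ t ∈ T, Vs ⊆ t.1 ∧ Es ⊆ t.2)

open Classical in
/-- Collapsing the edge `(vp, vc)` in the history sDAG `G`, via `E⁺`, `R`, `E⁻`, `E'`, `V'`. -/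
noncomputable def collapseDAGEdge (vp vc : HNode Y) (G : Hist Y) : Hist Y :=
  let vp' := newParent vp vc
  let Eplus : Set (HNode Y × HNode Y) :=
    (G.2 ∪ {e | ∃ v, e = (v, vp') ∧ (v, vp) ∈ G.2}
        ∪ {e | ∃ v, e = (vp', v) ∧ (vp, v) ∈ G.2 ∧ cladeUnion v ≠ cladeUnion vc}
        ∪ {e | ∃ v, e = (vp', v) ∧ (vc, v) ∈ G.2}) \ {(vp, vc)}
  let R : Set (HNode Y × HNode Y) :=
    if ∃ v, (vp, v) ∈ Eplus ∧ cladeUnion v = cladeUnion vc then ∅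
    else {e ∈ Eplus | e.2 = vp}
  let Eminus := Eplus \ R
  let E' := {e ∈ Eminus | Reach Eminus HNode.ua e.1}
  ({v | ∃ e ∈ E', v = e.1 ∨ v = e.2}, E')

/-- `t'` is obtained from `t` by a subhistory swap, replacing a subhistory of `t` by a
conforming subhistory of some history in `S`. -/
def SwapStepUsing (S : Set (Hist Y)) (t t' : Hist Y) : Prop :=
  ∃ t₂ ∈ S, ∃ Vs' Es' vr' vp,
    IsSubhistoryRooted t₂.1 t₂.2 Vs' Es' vr' ∧ (vp, vr') ∈ t₂.2 ∧
    ∃ Vs Es vr, IsSubhistoryRooted t.1 t.2 Vs Es vr ∧ (vp, vr) ∈ t.2 ∧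
      leafLabels Vs = leafLabels Vs' ∧
      t' = ((t.1 \ Vs) ∪ Vs', (t.2 \ (Es ∪ {(vp, vr)})) ∪ (Es' ∪ {(vp, vr')}))

/-- Leaves of an abstract rooted graph. -/
def IsLeafIn {α : Type v} (nodes : Set α) (edges : Set (α × α)) (x : α) : Prop :=
  x ∈ nodes ∧ ∀ c, (x, c) ∉ edges

/-- Reachability via directed edges in an abstract graph. -/
def GReach {α : Type v} (edges : Set (α × α)) (a b : α) : Prop :=
  Relation.ReflTransGen (fun x y => (x, y) ∈ edges) a b

/-- An (internally) labeled tree: a rooted multifurcating tree with no unifurcations,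
with node labels in `Y` that are injective on leaves. -/
structure IsLabeledTree {α : Type v} (nodes : Set α) (edges : Set (α × α))
    (root : α) (lab : α → Y) : Prop where
  root_mem : root ∈ nodes
  edge_mem : ∀ e ∈ edges, e.1 ∈ nodes ∧ e.2 ∈ nodes
  reach_root : ∀ x ∈ nodes, GReach edges root x
  unique_parent : ∀ x a b, (a, x) ∈ edges → (b, x) ∈ edges → a = b
  no_parent_root : ∀ a, (a, root) ∉ edges
  acyclic : ∀ x, ¬ Relation.TransGen (fun a b => (a, b) ∈ edges) x x
  no_unif : ∀ x ∈ nodes, ¬ (∃! c, (x, c) ∈ edges)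
  leaf_inj : ∀ x y, IsLeafIn nodes edges x → IsLeafIn nodes edges y → lab x = lab y → x = y
  finite : nodes.Finite

/-- The set `C_w` of leaf labels below a node `w` of an abstract labeled tree. -/
def leavesBelow {α : Type v} (nodes : Set α) (edges : Set (α × α)) (lab : α → Y) (w : α) :
    Set Y :=
  {y | ∃ u, IsLeafIn nodes edges u ∧ GReach edges w u ∧ y = lab u}

/-- The history sDAG node `v_w` associated to a node `w` of a labeled tree. -/
def treeNodeOf {α : Type v} (nodes : Set α) (edges : Set (α × α)) (lab : α → Y) (w : α) :
    HNode Y :=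
  HNode.node (lab w) {C | ∃ w', (w, w') ∈ edges ∧ C = leavesBelow nodes edges lab w'}

/-- The node set `V_t` of the history associated to a labeled tree. -/
def treeToHistV {α : Type v} (nodes : Set α) (edges : Set (α × α)) (lab : α → Y) :
    Set (HNode Y) :=
  insert HNode.ua (treeNodeOf nodes edges lab '' nodes)

/-- The edge set `E_t` of the history associated to a labeled tree. -/
def treeToHistE {α : Type v} (nodes : Set α) (edges : Set (α × α)) (root : α) (lab : α → Y) :
    Set (HNode Y × HNode Y) :=
  insert (HNode.ua, treeNodeOf nodes edges lab root)
    {e | ∃ w₁ w₂, (w₁, w₂) ∈ edges ∧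
      e = (treeNodeOf nodes edges lab w₁, treeNodeOf nodes edges lab w₂)}


/-! ### Auxiliary lemmas for the proof of `dag_history_from_swaps` -/

section Aux

variable {V : Set (HNode Y)} {E : Set (HNode Y × HNode Y)}

/-- The rank of a node: the cardinality of its clade union. -/
noncomputable def rank (v : HNode Y) : ℕ := (cladeUnion v).ncard

lemma cu_finite (hs : IsHSDAG V E) {v : HNode Y} (hv : v ∈ V) : (cladeUnion v).Finite := by
  cases v with
  | ua => simp [cladeUnion]
  | node ℓ U =>
    have hU := hs.valid ℓ U hv
    by_cases h : U = ∅
    · simp [cladeUnion, h]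
    · simp only [cladeUnion, if_neg h]; exact Set.Finite.sUnion hU.2.2.2.1 hU.2.2.2.2

lemma cu_ne_empty (hs : IsHSDAG V E) {v : HNode Y} (hv : v ∈ V) (hne : v ≠ HNode.ua) :
    cladeUnion v ≠ ∅ := by
  cases v with
  | ua => exact absurd rfl hne
  | node ℓ U =>
    have hU := hs.valid ℓ U hv
    by_cases h : U = ∅
    · simp [cladeUnion, h]
    · obtain ⟨C, hC⟩ := Set.nonempty_iff_ne_empty.2 h
      have hCne := hU.1 C hC
      simp only [cladeUnion, if_neg h]
      intro habs
      exact hCne (Set.subset_eq_empty (habs ▸ Set.subset_sUnion_of_mem hC) rfl)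

lemma step_sub (hs : IsHSDAG V E) {a b : HNode Y} (ha : a ∈ V) (hne : a ≠ HNode.ua)
    (hab : (a, b) ∈ E) : b ∈ V ∧ b ≠ HNode.ua ∧ cladeUnion b ⊂ cladeUnion a := by
  cases a with
  | ua => exact absurd rfl hne
  | node ℓ U =>
    have hU := hs.valid ℓ U ha
    have hcb : cladeUnion b ∈ U := hs.edge_clade ℓ U b hab
    have hUne : U ≠ ∅ := fun h => by simp [h] at hcb
    have hcua : cladeUnion (HNode.node ℓ U) = ⋃₀ U := by simp [cladeUnion, hUne]
    have hbV : b ∈ V := (hs.edge_mem _ hab).2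
    refine ⟨hbV, ?_, ?_⟩
    · intro h
      exact hU.1 _ hcb (by simpa [h, cladeUnion] using hcb)
    · rw [hcua]
      constructor
      · exact Set.subset_sUnion_of_mem hcb
      · -- there is another clade, disjoint from cladeUnion b
        have : ∃ C' ∈ U, C' ≠ cladeUnion b := by
          by_contra h
          push_neg at h
          exact hU.2.2.1 (cladeUnion b) (Set.eq_singleton_iff_unique_mem.2 ⟨hcb, h⟩)
        obtain ⟨C', hC'U, hC'ne⟩ := this
        obtain ⟨y, hy⟩ := Set.nonempty_iff_ne_empty.2 (hU.1 C' hC'U)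
        intro hsub
        have hyb : y ∈ cladeUnion b := hsub ⟨C', hC'U, hy⟩
        exact (hU.2.1 C' hC'U _ hcb hC'ne).ne_of_mem hy hyb rfl

lemma reach_sub (hs : IsHSDAG V E) {a b : HNode Y} (hr : Reach E a b) (ha : a ∈ V)
    (hne : a ≠ HNode.ua) : b ∈ V ∧ b ≠ HNode.ua ∧ cladeUnion b ⊆ cladeUnion a := by
  induction hr with
  | refl => exact ⟨ha, hne, subset_rfl⟩
  | tail hr hmb ih =>
    obtain ⟨hmV, hmne, hsub⟩ := ih
    obtain ⟨hbV, hbne, hss⟩ := step_sub hs hmV hmne hmb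
    exact ⟨hbV, hbne, hss.subset.trans hsub⟩

lemma rank_lt (hs : IsHSDAG V E) {a b : HNode Y} (ha : a ∈ V) (hne : a ≠ HNode.ua)
    (hab : (a, b) ∈ E) : rank b < rank a :=
  Set.ncard_lt_ncard (step_sub hs ha hne hab).2.2 (cu_finite hs ha)

lemma no_cycle (hs : IsHSDAG V E) {a b : HNode Y} (ha : a ∈ V) (hne : a ≠ HNode.ua)
    (hab : (a, b) ∈ E) (hr : Reach E b a) : False := by
  obtain ⟨hbV, hbne, hss⟩ := step_sub hs ha hne hab
  exact hss.not_subset ((reach_sub hs hr hbV hbne).2.2)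

lemma root_eq (hh : IsHistory V E) {r v : HNode Y} (hr : (HNode.ua, r) ∈ E)
    (hv : (HNode.ua, v) ∈ E) : v = r := by
  obtain ⟨w, _, hu⟩ := hh.2.1
  rw [hu v hv, hu r hr]

lemma reach_from_root (hh : IsHistory V E) {r : HNode Y} (hr : (HNode.ua, r) ∈ E)
    {v : HNode Y} (hv : v ∈ V) (hne : v ≠ HNode.ua) : Reach E r v := by
  have h := hh.1.reach_ua v hv
  rcases (Relation.ReflTransGen.cases_head h) with h' | ⟨x, hx, hxr⟩
  · exact absurd h'.symm hne
  · rw [← root_eq hh hr hx]; exact hxr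

lemma hist_desc_unique (hh : IsHistory V E) {ℓ : Y} {U : Set (Set Y)}
    (hmem : HNode.node ℓ U ∈ V) {w₁ w₂ : HNode Y} (h₁ : (HNode.node ℓ U, w₁) ∈ E)
    (h₂ : (HNode.node ℓ U, w₂) ∈ E) (hcu : cladeUnion w₁ = cladeUnion w₂) : w₁ = w₂ := by
  have hc₁ : cladeUnion w₁ ∈ U := hh.1.edge_clade ℓ U w₁ h₁
  obtain ⟨vc, _, hu⟩ := hh.2.2 ℓ U hmem (cladeUnion w₁) hc₁
  rw [hu w₁ ⟨h₁, rfl⟩, hu w₂ ⟨h₂, hcu.symm⟩]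

lemma up_aux (hh : IsHistory V E) :
    ∀ n : ℕ, ∀ x : HNode Y, x ∈ V → x ≠ HNode.ua → rank x < n →
      ∀ p₁ p₂ v : HNode Y, Reach E x p₁ → Reach E x p₂ →
        (p₁, v) ∈ E → (p₂, v) ∈ E → p₁ = p₂ := by
  intro n
  induction n with
  | zero => intro x _ _ h; omega
  | succ n ih =>
    intro x hxV hxne hrk p₁ p₂ v hr₁ hr₂ he₁ he₂
    -- mixed case helper: p₁ = x and p₂ strictly below a child c₂ is impossible
    have mixed : ∀ c₂ p : HNode Y, (x, c₂) ∈ E → Reach E c₂ p → (x, v) ∈ E →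
        (p, v) ∈ E → False := by
      intro c₂ p hc₂ hcp hxv hpv
      obtain ⟨hc₂V, hc₂ne, _⟩ := step_sub hh.1 hxV hxne hc₂
      obtain ⟨hpV, hpne, hpsub⟩ := reach_sub hh.1 hcp hc₂V hc₂ne
      by_cases hcu : cladeUnion v = cladeUnion c₂
      · have hvc : v = c₂ := by
          cases x with
          | ua => exact absurd rfl hxne
          | node ℓ U => exact hist_desc_unique hh hxV hxv hc₂ hcu
        exact no_cycle hh.1 hpV hpne hpv (hvc ▸ hcp)
      · cases x with
        | ua => exact absurd rfl hxne
        | node ℓ U =>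
          have hU := hh.1.valid ℓ U hxV
          have hv1 : cladeUnion v ∈ U := hh.1.edge_clade ℓ U v hxv
          have hc1 : cladeUnion c₂ ∈ U := hh.1.edge_clade ℓ U c₂ hc₂
          have hdisj := hU.2.1 _ hv1 _ hc1 hcu
          obtain ⟨_, hvne, hvss⟩ := step_sub hh.1 hpV hpne hpv
          obtain ⟨y, hy⟩ := Set.nonempty_iff_ne_empty.2
            (cu_ne_empty hh.1 (hh.1.edge_mem _ hpv).2 hvne)
          exact (hdisj.ne_of_mem hy (hvss.subset.trans hpsub hy)) rfl
    rcases Relation.ReflTransGen.cases_head hr₁ with h₁ | ⟨c₁, hc₁, hcr₁⟩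
    · rcases Relation.ReflTransGen.cases_head hr₂ with h₂ | ⟨c₂, hc₂, hcr₂⟩
      · rw [← h₁, ← h₂]
      · exact (mixed c₂ p₂ hc₂ hcr₂ (h₁ ▸ he₁) he₂).elim
    · rcases Relation.ReflTransGen.cases_head hr₂ with h₂ | ⟨c₂, hc₂, hcr₂⟩
      · exact (mixed c₁ p₁ hc₁ hcr₁ (h₂ ▸ he₂) he₁).elim
      · by_cases hcu : cladeUnion c₁ = cladeUnion c₂
        · have hcc : c₁ = c₂ := by
            cases x with
            | ua => exact absurd rfl hxne
            | node ℓ U => exact hist_desc_unique hh hxV hc₁ hc₂ hcu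
          obtain ⟨hc₁V, hc₁ne, _⟩ := step_sub hh.1 hxV hxne hc₁
          have : rank c₁ < n := by
            have := rank_lt hh.1 hxV hxne hc₁; omega
          exact ih c₁ hc₁V hc₁ne this p₁ p₂ v hcr₁ (hcc ▸ hcr₂) he₁ he₂
        · cases x with
          | ua => exact absurd rfl hxne
          | node ℓ U =>
            have hU := hh.1.valid ℓ U hxV
            have hc1 : cladeUnion c₁ ∈ U := hh.1.edge_clade ℓ U c₁ hc₁
            have hc2 : cladeUnion c₂ ∈ U := hh.1.edge_clade ℓ U c₂ hc₂
            have hdisj := hU.2.1 _ hc1 _ hc2 hcu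
            obtain ⟨hc₁V, hc₁ne, _⟩ := step_sub hh.1 hxV hxne hc₁
            obtain ⟨hc₂V, hc₂ne, _⟩ := step_sub hh.1 hxV hxne hc₂
            obtain ⟨hp₁V, hp₁ne, hp₁sub⟩ := reach_sub hh.1 hcr₁ hc₁V hc₁ne
            obtain ⟨hp₂V, hp₂ne, hp₂sub⟩ := reach_sub hh.1 hcr₂ hc₂V hc₂ne
            obtain ⟨_, hvne, hvss₁⟩ := step_sub hh.1 hp₁V hp₁ne he₁
            obtain ⟨_, _, hvss₂⟩ := step_sub hh.1 hp₂V hp₂ne he₂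
            obtain ⟨y, hy⟩ := Set.nonempty_iff_ne_empty.2
              (cu_ne_empty hh.1 (hh.1.edge_mem _ he₁).2 hvne)
            exact ((hdisj.ne_of_mem (hvss₁.subset.trans hp₁sub hy)
              (hvss₂.subset.trans hp₂sub hy)) rfl).elim

/-- In a history, every node has at most one parent. -/
lemma unique_parent (hh : IsHistory V E) {r p₁ p₂ v : HNode Y} (hr : (HNode.ua, r) ∈ E)
    (h₁ : (p₁, v) ∈ E) (h₂ : (p₂, v) ∈ E) : p₁ = p₂ := by
  have hrV : r ∈ V := (hh.1.edge_mem _ hr).2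
  have hrne : r ≠ HNode.ua := fun h => hh.1.no_in_ua HNode.ua (h ▸ hr)
  by_cases hp₁ : p₁ = HNode.ua
  · by_cases hp₂ : p₂ = HNode.ua
    · rw [hp₁, hp₂]
    · have hv : v = r := root_eq hh hr (hp₁ ▸ h₁)
      have hp₂V : p₂ ∈ V := (hh.1.edge_mem _ h₂).1
      exact absurd (no_cycle hh.1 hp₂V hp₂ (hv ▸ h₂)
        (reach_from_root hh hr hp₂V hp₂)) not_false
  · by_cases hp₂ : p₂ = HNode.ua
    · have hv : v = r := root_eq hh hr (hp₂ ▸ h₂)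
      have hp₁V : p₁ ∈ V := (hh.1.edge_mem _ h₁).1
      exact absurd (no_cycle hh.1 hp₁V hp₁ (hv ▸ h₁)
        (reach_from_root hh hr hp₁V hp₁)) not_false
    · exact up_aux hh (rank r + 1) r hrV hrne (by omega) p₁ p₂ v
        (reach_from_root hh hr (hh.1.edge_mem _ h₁).1 hp₁)
        (reach_from_root hh hr (hh.1.edge_mem _ h₂).1 hp₂) h₁ h₂

lemma out_finite (hh : IsHistory V E) {x : HNode Y} (hx : x ∈ V) :
    {w : HNode Y | (x, w) ∈ E}.Finite := by
  cases x with
  | ua =>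
    obtain ⟨w, hw, hu⟩ := hh.2.1
    exact Set.Finite.subset (Set.finite_singleton w) (fun b hb => hu b hb)
  | node ℓ U =>
    have hU := hh.1.valid ℓ U hx
    apply Set.Finite.of_finite_image (f := cladeUnion)
    · exact Set.Finite.subset hU.2.2.2.1 (by
        rintro C ⟨w, hw, rfl⟩
        exact hh.1.edge_clade ℓ U w hw)
    · intro w₁ h₁ w₂ h₂ hcu
      exact hist_desc_unique hh hx h₁ h₂ hcu

lemma reach_finite (hh : IsHistory V E) :
    ∀ n : ℕ, ∀ x : HNode Y, x ∈ V → x ≠ HNode.ua → rank x < n →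
      {b : HNode Y | Reach E x b}.Finite := by
  intro n
  induction n with
  | zero => intro x _ _ h; omega
  | succ n ih =>
    intro x hxV hxne hrk
    have hsub : {b : HNode Y | Reach E x b} ⊆
        insert x (⋃ w ∈ {w : HNode Y | (x, w) ∈ E}, {b : HNode Y | Reach E w b}) := by
      intro b hb
      rcases Relation.ReflTransGen.cases_head hb with h | ⟨w, hw, hwr⟩
      · exact h ▸ Set.mem_insert x _
      · exact Set.mem_insert_iff.2 (Or.inr (Set.mem_biUnion hw hwr))
    refine Set.Finite.subset (Set.Finite.insert x (Set.Finite.biUnion (out_finite hh hxV)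
      (fun w hw => ?_))) hsub
    obtain ⟨hwV, hwne, _⟩ := step_sub hh.1 hxV hxne hw
    have := rank_lt hh.1 hxV hxne hw
    exact ih w hwV hwne (by omega)

lemma nodes_finite (hh : IsHistory V E) : V.Finite := by
  obtain ⟨r, hr, _⟩ := hh.2.1
  have hrV : r ∈ V := (hh.1.edge_mem _ hr).2
  have hrne : r ≠ HNode.ua := fun h => hh.1.no_in_ua HNode.ua (h ▸ hr)
  refine Set.Finite.subset (Set.Finite.insert HNode.ua
    (reach_finite hh (rank r + 1) r hrV hrne (by omega))) (fun v hv => ?_)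
  by_cases hne : v = HNode.ua
  · exact hne ▸ Set.mem_insert _ _
  · exact Set.mem_insert_iff.2 (Or.inr (reach_from_root hh hr hv hne))

lemma edges_finite (hh : IsHistory V E) : E.Finite := by
  refine Set.Finite.subset ((nodes_finite hh).prod (nodes_finite hh)) (fun e he => ?_)
  exact ⟨(hh.1.edge_mem e he).1, (hh.1.edge_mem e he).2⟩

lemma leafLabels_reach (hh : IsHistory V E) :
    ∀ n : ℕ, ∀ x : HNode Y, x ∈ V → x ≠ HNode.ua → rank x < n →
      leafLabels {b : HNode Y | Reach E x b} = cladeUnion x := by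
  intro n
  induction n with
  | zero => intro x _ _ h; omega
  | succ n ih =>
    intro x hxV hxne hrk
    cases x with
    | ua => exact absurd rfl hxne
    | node ℓ U =>
      have hU := hh.1.valid ℓ U hxV
      ext y
      simp only [leafLabels, Set.mem_setOf_eq]
      constructor
      · intro hy
        rcases Relation.ReflTransGen.cases_head hy with h | ⟨w, hw, hwr⟩
        · obtain ⟨h1, h2⟩ : ℓ = y ∧ U = ∅ := by
            cases h; exact ⟨rfl, rfl⟩
          simp [cladeUnion, h2, h1]
        · obtain ⟨hwV, hwne, hss⟩ := step_sub hh.1 hxV hxne hw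
          have hrw := rank_lt hh.1 hxV hxne hw
          have : y ∈ cladeUnion w := by
            rw [← ih w hwV hwne (by omega)]; exact hwr
          exact hss.subset this
      · intro hy
        by_cases hU0 : U = ∅
        · have : y = ℓ := by simpa [cladeUnion, hU0] using hy
          rw [this, hU0]
          exact Relation.ReflTransGen.refl
        · rw [cladeUnion, if_neg hU0] at hy
          obtain ⟨C, hCU, hyC⟩ := hy
          obtain ⟨w, ⟨hw, hwcu⟩, _⟩ := hh.2.2 ℓ U hxV C hCU
          obtain ⟨hwV, hwne, _⟩ := step_sub hh.1 hxV hxne hw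
          have hrw := rank_lt hh.1 hxV hxne hw
          have : y ∈ leafLabels {b : HNode Y | Reach E w b} := by
            rw [ih w hwV hwne (by omega), hwcu]; exact hyC
          exact Relation.ReflTransGen.head hw this

lemma reach_closed {a b : HNode Y} {x : HNode Y} (hr : Reach E a b)
    (hx : Reach E x a) : Reach E x b := hx.trans hr

lemma reach_restrict {x : HNode Y} {a b : HNode Y} (hr : Reach E a b)
    (hx : Reach E x a) :
    Reach {f : HNode Y × HNode Y | f ∈ E ∧ Reach E x f.1} a b := by
  induction hr with
  | refl => exact Relation.ReflTransGen.refl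
  | tail hac hcb ih =>
    rename_i c _
    exact Relation.ReflTransGen.tail (ih) ⟨hcb, hx.trans hac⟩

/-- The full sub-DAG below a non-UA node of a history is a subhistory. -/
lemma subhistory_reach (hh : IsHistory V E) {x : HNode Y} (hx : x ∈ V)
    (hne : x ≠ HNode.ua) :
    IsSubhistoryRooted V E {b : HNode Y | Reach E x b}
      {f : HNode Y × HNode Y | f ∈ E ∧ Reach E x f.1} x where
  subV := fun b hb => (reach_sub hh.1 hb hx hne).1
  subE := fun f hf => hf.1
  ua_not_mem := fun h => (reach_sub hh.1 h hx hne).2.1 rfl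
  edge_mem := fun f hf => ⟨hf.2, hf.2.tail hf.1⟩
  root_mem := Relation.ReflTransGen.refl
  reach_root := fun v hv => reach_restrict hv Relation.ReflTransGen.refl
  unique_desc := by
    intro ℓ U hmem C hC
    obtain ⟨vc, ⟨hvc, hcu⟩, _⟩ := hh.2.2 ℓ U ((reach_sub hh.1 hmem hx hne).1) C hC
    refine ⟨vc, ⟨⟨hvc, hmem⟩, hcu⟩, ?_⟩
    rintro w ⟨⟨hw, _⟩, hwcu⟩
    exact hist_desc_unique hh (reach_sub hh.1 hmem hx hne).1 hw hvc (hwcu.trans hcu.symm)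

/-- Separation lemma: any node of a history whose clade union is contained in
the clade union of `v₀` lies below `v₀`. -/
lemma below_of_cu_subset (hh : IsHistory V E) {r : HNode Y} (hr : (HNode.ua, r) ∈ E)
    {v₀ w : HNode Y} (hv₀ : v₀ ∈ V) (h₀ : v₀ ≠ HNode.ua) (hw : w ∈ V)
    (hwu : w ≠ HNode.ua) (hsub : cladeUnion w ⊆ cladeUnion v₀) : Reach E v₀ w := by
  have haux : ∀ n : ℕ, ∀ x : HNode Y, x ∈ V → x ≠ HNode.ua → rank x < n →
      Reach E x v₀ → Reach E x w → Reach E v₀ w := by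
    intro n
    induction n with
    | zero => intro x _ _ h; omega
    | succ n ih =>
      intro x hxV hxne hrk hxv hxw
      rcases Relation.ReflTransGen.cases_head hxv with h | ⟨c₂, hc₂, hcr₂⟩
      · exact h ▸ hxw
      · obtain ⟨hc₂V, hc₂ne, hss₂⟩ := step_sub hh.1 hxV hxne hc₂
        have hv₀c₂ : cladeUnion v₀ ⊆ cladeUnion c₂ := (reach_sub hh.1 hcr₂ hc₂V hc₂ne).2.2
        rcases Relation.ReflTransGen.cases_head hxw with h | ⟨c₁, hc₁, hcr₁⟩
        · exfalso
          have : cladeUnion x ⊆ cladeUnion c₂ := h ▸ (hsub.trans hv₀c₂)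
          exact hss₂.not_subset this
        · obtain ⟨hc₁V, hc₁ne, hss₁⟩ := step_sub hh.1 hxV hxne hc₁
          have hwc₁ : cladeUnion w ⊆ cladeUnion c₁ := (reach_sub hh.1 hcr₁ hc₁V hc₁ne).2.2
          by_cases hcu : cladeUnion c₁ = cladeUnion c₂
          · have hcc : c₁ = c₂ := by
              cases x with
              | ua => exact absurd rfl hxne
              | node ℓ U => exact hist_desc_unique hh hxV hc₁ hc₂ hcu
            have := rank_lt hh.1 hxV hxne hc₁
            exact ih c₁ hc₁V hc₁ne (by omega) (hcc ▸ hcr₂) hcr₁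
          · exfalso
            cases x with
            | ua => exact absurd rfl hxne
            | node ℓ U =>
              have hU := hh.1.valid ℓ U hxV
              have hc1 : cladeUnion c₁ ∈ U := hh.1.edge_clade ℓ U c₁ hc₁
              have hc2 : cladeUnion c₂ ∈ U := hh.1.edge_clade ℓ U c₂ hc₂
              have hdisj := hU.2.1 _ hc1 _ hc2 hcu
              obtain ⟨y, hy⟩ := Set.nonempty_iff_ne_empty.2 (cu_ne_empty hh.1 hw hwu)
              exact (hdisj.ne_of_mem (hwc₁ hy) (hsub.trans hv₀c₂ hy)) rfl
  have hrV : r ∈ V := (hh.1.edge_mem _ hr).2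
  have hrne : r ≠ HNode.ua := fun h => hh.1.no_in_ua HNode.ua (h ▸ hr)
  exact haux (rank r + 1) r hrV hrne (by omega)
    (reach_from_root hh hr hv₀ h₀) (reach_from_root hh hr hw hwu)

/-- Two histories with the edges of one contained in the other are equal. -/
lemma history_eq_of_subset {Vc Vt : Set (HNode Y)} {Ec Et : Set (HNode Y × HNode Y)}
    (hc : IsHistory Vc Ec) (htt : IsHistory Vt Et) (hsub : Et ⊆ Ec) :
    Vc = Vt ∧ Ec = Et := by
  have edge_in : ∀ f ∈ Ec, f.1 ∈ Vt → f ∈ Et := by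
    intro f hf hf1
    obtain ⟨a, b⟩ := f
    cases a with
    | ua =>
      obtain ⟨rt, hrt, _⟩ := htt.2.1
      have : b = rt := root_eq hc (hsub hrt) hf
      exact this ▸ hrt
    | node ℓ U =>
      have hcu : cladeUnion b ∈ U := hc.1.edge_clade ℓ U b hf
      obtain ⟨w, ⟨hw, hwcu⟩, _⟩ := htt.2.2 ℓ U hf1 (cladeUnion b) hcu
      have : b = w := hist_desc_unique hc (hc.1.edge_mem _ hf).1 hf (hsub hw) hwcu.symm
      exact this ▸ hw
  have node_in : ∀ v : HNode Y, Reach Ec HNode.ua v → v ∈ Vt := by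
    intro v hv
    induction hv with
    | refl => exact htt.1.ua_mem
    | tail hm he ih => exact (htt.1.edge_mem _ (edge_in _ he ih)).2
  have hVct : Vc ⊆ Vt := fun v hv => node_in v (hc.1.reach_ua v hv)
  have hEct : Ec ⊆ Et := fun f hf => edge_in f hf (hVct (hc.1.edge_mem _ hf).1)
  have hVtc : Vt ⊆ Vc := by
    intro v hv
    have := htt.1.reach_ua v hv
    rcases Relation.ReflTransGen.cases_tail this with h | ⟨w, _, hwv⟩
    · exact h ▸ hc.1.ua_mem
    · exact (hc.1.edge_mem _ (hsub hwv)).2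
  exact ⟨Set.Subset.antisymm hVct hVtc, Set.Subset.antisymm hEct hsub⟩

/-- The potential function used to show termination of the swap process. -/
noncomputable def mu (t c : Hist Y) : ℕ :=
  ∑ᶠ f ∈ (t.2 \ c.2), (t.2.ncard + 1) ^ rank f.1

lemma swap_step {T : Set (Hist Y)} (hT : ∀ u ∈ T, IsHistory u.1 u.2) (t : Hist Y)
    (htH : IsHistory t.1 t.2) (htE : t.2 ⊆ unionE T)
    {rt : HNode Y} (hrt : (HNode.ua, rt) ∈ t.2)
    (c : Hist Y) (hcV : c.1 ⊆ unionV T) (hcE : c.2 ⊆ unionE T)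
    (hc : IsHistory c.1 c.2) (hrc : (HNode.ua, rt) ∈ c.2)
    (hnsub : ¬ t.2 ⊆ c.2) :
    ∃ c' : Hist Y, SwapStepUsing T c c' ∧ c'.1 ⊆ unionV T ∧ c'.2 ⊆ unionE T ∧
      IsHistory c'.1 c'.2 ∧ (HNode.ua, rt) ∈ c'.2 ∧ mu t c' < mu t c := by
  classical
  have hFt : t.2.Finite := edges_finite htH
  have hM : (t.2 \ c.2).Finite := hFt.diff
  have hMne : hM.toFinset.Nonempty := by
    rw [Set.Finite.toFinset_nonempty]
    obtain ⟨f, hf1, hf2⟩ := Set.not_subset.1 hnsub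
    exact ⟨f, hf1, hf2⟩
  obtain ⟨e, heM, hmax⟩ := Finset.exists_max_image hM.toFinset (fun f => rank f.1) hMne
  rw [Set.Finite.mem_toFinset] at heM
  obtain ⟨heT, heC⟩ := heM
  have heT' : (e.1, e.2) ∈ t.2 := by rw [Prod.mk.eta]; exact heT
  -- the source of `e` is not the UA node
  have he1ne : e.1 ≠ HNode.ua := by
    intro h
    have h2 : e.2 = rt := root_eq htH hrt (h ▸ heT')
    apply heC
    rw [← Prod.mk.eta (p := e), h, h2]
    exact hrc
  have he1t : e.1 ∈ t.1 := (htH.1.edge_mem _ heT).1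
  -- the source of `e` is a node of `c`
  have he1c : e.1 ∈ c.1 := by
    rcases Relation.ReflTransGen.cases_tail (htH.1.reach_ua e.1 he1t) with h | ⟨p, hp, hpe⟩
    · exact absurd h he1ne
    · by_cases hpu : p = HNode.ua
      · have : e.1 = rt := root_eq htH hrt (hpu ▸ hpe)
        exact this ▸ (hc.1.edge_mem _ hrc).2
      · have hpt : p ∈ t.1 := (htH.1.edge_mem _ hpe).1
        have hlt : rank e.1 < rank p := rank_lt htH.1 hpt hpu hpe
        by_cases hpc : (p, e.1) ∈ c.2
        · exact (hc.1.edge_mem _ hpc).2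
        · have : (p, e.1) ∈ hM.toFinset := by
            rw [Set.Finite.mem_toFinset]; exact ⟨hpe, hpc⟩
          have := hmax _ this
          simp only at this
          omega
  obtain ⟨ℓ, U, hℓU⟩ : ∃ ℓ U, e.1 = HNode.node ℓ U := by
    cases h : e.1 with
    | ua => exact absurd h he1ne
    | node ℓ U => exact ⟨ℓ, U, rfl⟩
  have hU := hc.1.valid ℓ U (hℓU ▸ he1c)
  set C := cladeUnion e.2 with hCdef
  have hCU : C ∈ U := htH.1.edge_clade ℓ U e.2 (by rw [← hℓU]; exact heT')
  have hCne : C ≠ ∅ := hU.1 C hCU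
  -- the descendant of the pair `(e.1, C)` in `c`
  obtain ⟨vrc, ⟨hvrc, hvrccu⟩, _⟩ := hc.2.2 ℓ U (hℓU ▸ he1c) C hCU
  have hvrc' : (e.1, vrc) ∈ c.2 := by rw [hℓU]; exact hvrc
  have hvrcc : vrc ∈ c.1 := (hc.1.edge_mem _ hvrc').2
  have hvrcne : vrc ≠ HNode.ua := by
    intro h; apply hCne; rw [← hvrccu, h]; rfl
  -- the history of `T` containing `e`
  have heU : e ∈ unionE T := htE heT
  simp only [unionE, Set.mem_iUnion] at heU
  obtain ⟨t₂, ht₂T, het₂⟩ := heU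
  have ht₂ := hT t₂ ht₂T
  have het₂' : (e.1, e.2) ∈ t₂.2 := by rw [Prod.mk.eta]; exact het₂
  have he2t₂ : e.2 ∈ t₂.1 := (ht₂.1.edge_mem _ het₂).2
  have he2ne : e.2 ≠ HNode.ua := by
    intro h; apply hCne; rw [hCdef, h]; rfl
  -- the two subhistories
  set Vs : Set (HNode Y) := {b | Reach c.2 vrc b} with hVsdef
  set Es : Set (HNode Y × HNode Y) := {f | f ∈ c.2 ∧ Reach c.2 vrc f.1} with hEsdef
  set Vs' : Set (HNode Y) := {b | Reach t₂.2 e.2 b} with hVs'def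
  set Es' : Set (HNode Y × HNode Y) := {f | f ∈ t₂.2 ∧ Reach t₂.2 e.2 f.1} with hEs'def
  have hsubc : IsSubhistoryRooted c.1 c.2 Vs Es vrc := subhistory_reach hc hvrcc hvrcne
  have hsubt₂ : IsSubhistoryRooted t₂.1 t₂.2 Vs' Es' e.2 := subhistory_reach ht₂ he2t₂ he2ne
  -- basic structural facts
  have hVsfacts : ∀ b ∈ Vs, b ∈ c.1 ∧ b ≠ HNode.ua ∧ cladeUnion b ⊆ C := by
    intro b hb
    obtain ⟨h1, h2, h3⟩ := reach_sub hc.1 hb hvrcc hvrcne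
    exact ⟨h1, h2, hvrccu ▸ h3⟩
  have hVs'facts : ∀ b ∈ Vs', b ∈ t₂.1 ∧ b ≠ HNode.ua ∧ cladeUnion b ⊆ C := by
    intro b hb
    obtain ⟨h1, h2, h3⟩ := reach_sub ht₂.1 hb he2t₂ he2ne
    exact ⟨h1, h2, h3⟩
  have huaVs : HNode.ua ∉ Vs := fun h => (hVsfacts _ h).2.1 rfl
  have huaVs' : HNode.ua ∉ Vs' := fun h => (hVs'facts _ h).2.1 rfl
  have hvrcVs : vrc ∈ Vs := Relation.ReflTransGen.refl
  have he2Vs' : e.2 ∈ Vs' := Relation.ReflTransGen.refl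
  have hvpVs : e.1 ∉ Vs := fun h => no_cycle hc.1 he1c he1ne hvrc' h
  -- separation: nodes of `c` inside `Vs'` are inside `Vs`
  have hsep : ∀ w ∈ Vs', w ∈ c.1 → w ∈ Vs := by
    intro w hw hwc
    exact below_of_cu_subset hc hrc hvrcc hvrcne hwc (hVs'facts _ hw).2.1
      (hvrccu ▸ (hVs'facts _ hw).2.2)
  have hclosed : ∀ a b : HNode Y, a ∈ Vs → (a, b) ∈ c.2 → b ∈ Vs :=
    fun a b ha hab => Relation.ReflTransGen.tail ha hab
  -- edges entering `Vs` from outside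
  have hedge_into : ∀ f ∈ c.2, (f : HNode Y × HNode Y).2 ∈ Vs → f.1 ∉ Vs →
      f = (e.1, vrc) := by
    intro f hf h2 h1
    have hf' : (f.1, f.2) ∈ c.2 := by rw [Prod.mk.eta]; exact hf
    rcases Relation.ReflTransGen.cases_tail h2 with h | ⟨w, hw, hwf⟩
    · have : f.1 = e.1 := unique_parent hc hrc hf' (h ▸ hvrc')
      rw [← Prod.mk.eta (p := f), this, h]
    · have : f.1 = w := unique_parent hc hrc hf' hwf
      exact absurd (this ▸ hw : f.1 ∈ Vs) h1
  -- the swapped history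
  set c' : Hist Y := ((c.1 \ Vs) ∪ Vs',
      (c.2 \ (Es ∪ {(e.1, vrc)})) ∪ (Es' ∪ {(e.1, e.2)})) with hc'def
  -- membership helpers for c'.2
  have hin1 : ∀ f ∈ c.2, (f : HNode Y × HNode Y).1 ∉ Vs → f ≠ (e.1, vrc) → f ∈ c'.2 := by
    intro f hf h1 h2
    exact Or.inl ⟨hf, by
      intro h
      rcases h with h | h
      · exact h1 h.2
      · exact h2 h⟩
  have hin2 : Es' ⊆ c'.2 := fun f hf => Or.inr (Or.inl hf)
  have hin3 : (e.1, e.2) ∈ c'.2 := Or.inr (Or.inr rfl)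
  have hcls : ∀ f ∈ c'.2, (f ∈ c.2 ∧ (f : HNode Y × HNode Y).1 ∉ Vs ∧ f ≠ (e.1, vrc)) ∨
      f ∈ Es' ∨ f = (e.1, e.2) := by
    intro f hf
    rcases hf with ⟨hf, hnot⟩ | hf
    · refine Or.inl ⟨hf, fun h => hnot (Or.inl ⟨hf, h⟩), fun h => hnot (Or.inr h)⟩
    · rcases hf with hf | hf
      · exact Or.inr (Or.inl hf)
      · exact Or.inr (Or.inr hf)
  -- surviving c-edges avoid Vs entirely
  have hsurv : ∀ f, f ∈ c.2 → (f : HNode Y × HNode Y).1 ∉ Vs → f ≠ (e.1, vrc) →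
      f.2 ∉ Vs := by
    intro f hf h1 h2 habs
    exact h2 (hedge_into f hf habs h1)
  -- reachability in c' for nodes outside Vs
  have hreach' : ∀ a b : HNode Y, Reach c.2 a b → b ∉ Vs → Reach c'.2 a b := by
    intro a b hab
    induction hab with
    | refl => intro _; exact Relation.ReflTransGen.refl
    | @tail m b' ham hm ih =>
      intro hb'
      have hmVs : m ∉ Vs := fun h => hb' (hclosed m b' h hm)
      refine Relation.ReflTransGen.tail (ih hmVs) ?_
      refine hin1 _ hm hmVs ?_
      intro h
      apply hb'
      have : b' = vrc := congrArg Prod.snd h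
      exact this ▸ hvrcVs
  -- the new node `e.1` seen as a labelled node
  have he1c' : e.1 ∈ c'.1 := Or.inl ⟨he1c, hvpVs⟩
  have hrtc' : (HNode.ua, rt) ∈ c'.2 := by
    refine hin1 _ hrc huaVs ?_
    intro h
    exact he1ne (congrArg Prod.fst h).symm
  -- `c'` is a history
  have hc'H : IsHistory c'.1 c'.2 := by
    have huniq : ∀ ℓ' U', HNode.node ℓ' U' ∈ c'.1 → ∀ C' ∈ U',
        ∃! vc, (HNode.node ℓ' U', vc) ∈ c'.2 ∧ cladeUnion vc = C' := by
      intro ℓ' U' hx C' hC'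
      set x := HNode.node ℓ' U' with hxdef
      by_cases hxVs' : x ∈ Vs'
      · -- all descendant edges of x in c' come from Es'
        have hxe1 : x ≠ e.1 := by
          intro h
          rw [h] at hxVs'
          exact hvpVs (hsep e.1 hxVs' he1c)
        have honly : ∀ w, (x, w) ∈ c'.2 → (x, w) ∈ Es' := by
          intro w hw
          rcases hcls _ hw with ⟨hw1, hw2, _⟩ | hw' | hw'
          · exact absurd (hsep x hxVs' (hc.1.edge_mem _ hw1).1) hw2
          · exact hw'
          · exact absurd (congrArg Prod.fst hw') hxe1
        obtain ⟨vc, ⟨hvc, hvccu⟩, hvcu⟩ := hsubt₂.unique_desc ℓ' U' hxVs' C' hC'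
        exact ⟨vc, ⟨hin2 hvc, hvccu⟩, fun w ⟨hw, hwcu⟩ => hvcu w ⟨honly w hw, hwcu⟩⟩
      · -- x is a retained node of c
        have hxc : x ∈ c.1 := by
          rcases hx with ⟨h, _⟩ | h
          · exact h
          · exact absurd h hxVs'
        have hxVs : x ∉ Vs := by
          rcases hx with ⟨_, h⟩ | h
          · exact h
          · exact absurd h hxVs'
        have honly : ∀ w, (x, w) ∈ c'.2 → ((x, w) ∈ c.2 ∧ (x, w) ≠ (e.1, vrc)) ∨
            (x = e.1 ∧ w = e.2) := by
          intro w hw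
          rcases hcls _ hw with ⟨hw1, _, hw3⟩ | hw' | hw'
          · exact Or.inl ⟨hw1, hw3⟩
          · exact absurd (hsubt₂.edge_mem _ hw').1 hxVs'
          · exact Or.inr ⟨congrArg Prod.fst hw', congrArg Prod.snd hw'⟩
        obtain ⟨w₀, ⟨hw₀, hw₀cu⟩, _⟩ := hc.2.2 ℓ' U' hxc C' hC'
        by_cases hxeq : x = e.1 ∧ C' = C
        · -- use the new edge (e.1, e.2)
          refine ⟨e.2, ⟨by rw [hxeq.1]; exact hin3, hxeq.2 ▸ rfl⟩, ?_⟩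
          rintro w ⟨hw, hwcu⟩
          rcases honly w hw with ⟨hw1, hw2⟩ | ⟨_, hw2⟩
          · exfalso
            have : w = vrc := by
              have hx' : x = HNode.node ℓ U := hxeq.1.trans hℓU
              refine hist_desc_unique hc (hx' ▸ hxc) (hx' ▸ hw1) ?_ ?_
              · rw [← hℓU, ← hxeq.1]; exact hxeq.1 ▸ hvrc'
              · rw [hwcu, hvrccu, hxeq.2]
            exact hw2 (by rw [this, hxeq.1])
          · exact hw2
        · -- use the retained edge of c
          have hw₀ne : (x, w₀) ≠ (e.1, vrc) := by
            intro h
            apply hxeq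
            have h1 : x = e.1 := congrArg Prod.fst h
            have h2 : w₀ = vrc := congrArg Prod.snd h
            exact ⟨h1, by rw [← hw₀cu, h2, hvrccu]⟩
          refine ⟨w₀, ⟨hin1 _ hw₀ hxVs hw₀ne, hw₀cu⟩, ?_⟩
          rintro w ⟨hw, hwcu⟩
          rcases honly w hw with ⟨hw1, _⟩ | ⟨hq1, hq2⟩
          · exact hist_desc_unique hc hxc hw1 hw₀ (hwcu.trans hw₀cu.symm)
          · exfalso
            apply hxeq
            refine ⟨hq1, ?_⟩
            rw [← hwcu, hq2]
    refine ⟨⟨?_, ?_, ?_, ?_, ?_, ?_, ?_⟩, ⟨rt, hrtc', ?_⟩, ?_⟩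
    · exact Or.inl ⟨hc.1.ua_mem, huaVs⟩
    · intro ℓ' U' hv
      rcases hv with ⟨h, _⟩ | h
      · exact hc.1.valid ℓ' U' h
      · exact ht₂.1.valid ℓ' U' (hsubt₂.subV h)
    · intro f hf
      rcases hcls _ hf with ⟨h1, h2, h3⟩ | h | h
      · exact ⟨Or.inl ⟨(hc.1.edge_mem _ h1).1, h2⟩,
          Or.inl ⟨(hc.1.edge_mem _ h1).2, hsurv f h1 h2 h3⟩⟩
      · exact ⟨Or.inr (hsubt₂.edge_mem _ h).1, Or.inr (hsubt₂.edge_mem _ h).2⟩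
      · rw [h]; exact ⟨he1c', Or.inr he2Vs'⟩
    · intro v hv
      rcases hv with ⟨h1, h2⟩ | h
      · exact hreach' HNode.ua v (hc.1.reach_ua v h1) h2
      · have h1 : Reach c'.2 HNode.ua e.1 :=
          hreach' HNode.ua e.1 (hc.1.reach_ua e.1 he1c) hvpVs
        have h2 : Reach c'.2 e.1 e.2 := Relation.ReflTransGen.single hin3
        have h3 : Reach c'.2 e.2 v := by
          have hr := hsubt₂.reach_root v h
          unfold Reach at hr ⊢
          clear h
          induction hr with
          | refl => exact Relation.ReflTransGen.refl
          | tail _ hb ih => exact ih.tail (hin2 hb)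
        exact (h1.trans h2).trans h3
    · intro v hv
      rcases hcls _ hv with ⟨h1, _, _⟩ | h | h
      · exact hc.1.no_in_ua v h1
      · exact ht₂.1.no_in_ua v (hsubt₂.subE h)
      · exact he2ne ((Prod.ext_iff.1 h).2).symm
    · intro ℓ' U' v hf
      rcases hcls _ hf with ⟨h1, _, _⟩ | h | h
      · exact hc.1.edge_clade ℓ' U' v h1
      · exact ht₂.1.edge_clade ℓ' U' v (hsubt₂.subE h)
      · have h1 : HNode.node ℓ' U' = e.1 := congrArg Prod.fst h
        have h2 : v = e.2 := congrArg Prod.snd h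
        have h3 : HNode.node ℓ' U' = HNode.node ℓ U := h1.trans hℓU
        have h4 : U' = U := by injection h3
        rw [h4, h2]
        exact hCU
    · intro ℓ' U' hmem C' hC'
      obtain ⟨vc, hvc, _⟩ := huniq ℓ' U' hmem C' hC'
      exact ⟨vc, hvc.1, hvc.2⟩
    · intro v hv
      rcases hcls _ hv with ⟨h1, _, _⟩ | h | h
      · exact root_eq hc hrc h1
      · exact absurd (hsubt₂.edge_mem _ h).1 huaVs'
      · exact absurd (congrArg Prod.fst h).symm he1ne
    · exact huniq
  -- c' is a swap of c
  have hswap : SwapStepUsing T c c' := by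
    refine ⟨t₂, ht₂T, Vs', Es', e.2, e.1, hsubt₂, het₂', Vs, Es, vrc, hsubc, hvrc', ?_, rfl⟩
    have h1 : leafLabels Vs = cladeUnion vrc :=
      leafLabels_reach hc (rank vrc + 1) vrc hvrcc hvrcne (by omega)
    have h2 : leafLabels Vs' = cladeUnion e.2 :=
      leafLabels_reach ht₂ (rank e.2 + 1) e.2 he2t₂ he2ne (by omega)
    rw [h1, h2, hvrccu]
  -- c' lives in the union sDAG
  have hc'V : c'.1 ⊆ unionV T := by
    rintro v (⟨h, _⟩ | h)
    · exact hcV h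
    · exact Set.mem_biUnion ht₂T (hsubt₂.subV h)
  have hc'E : c'.2 ⊆ unionE T := by
    rintro f hf
    rcases hcls _ hf with ⟨h1, _, _⟩ | h | h
    · exact hcE h1
    · exact Set.mem_biUnion ht₂T (hsubt₂.subE h)
    · exact h ▸ Set.mem_biUnion ht₂T het₂'
  -- the potential strictly decreases
  have hmu : mu t c' < mu t c := by
    set K : ℕ := t.2.ncard + 1 with hKdef
    have hM' : (t.2 \ c'.2).Finite := hFt.diff
    have hD : (t.2 ∩ Es).Finite := hFt.inter_of_left _
    have hevrc : (e.1, vrc) ∉ t.2 := by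
      intro habs
      have : vrc = e.2 := by
        refine hist_desc_unique htH (hℓU ▸ he1t) (hℓU ▸ habs) (hℓU ▸ heT') ?_
        rw [hvrccu]
      exact heC (by rw [← Prod.mk.eta (p := e), ← this]; exact hvrc')
    -- the new missing set is contained in the old one plus removed edges, minus e
    have hsubM : (t.2 \ c'.2) ⊆ (((t.2 \ c.2) ∪ (t.2 ∩ Es)) \ {e}) := by
      rintro f ⟨hft, hfc'⟩
      have hfe : f ≠ e := by
        intro h
        exact hfc' (h ▸ (Prod.mk.eta (p := e) ▸ hin3))
      refine ⟨?_, hfe⟩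
      by_cases hfc : f ∈ c.2
      · right
        refine ⟨hft, hfc, ?_⟩
        by_contra hnr
        apply hfc'
        refine hin1 f hfc hnr ?_
        intro h
        exact hevrc (h ▸ hft)
      · exact Or.inl ⟨hft, hfc⟩
    have hμ' : mu t c' = ∑ f ∈ hM'.toFinset, K ^ rank f.1 :=
      finsum_mem_eq_finite_toFinset_sum _ hM'
    have hμ : mu t c = ∑ f ∈ hM.toFinset, K ^ rank f.1 :=
      finsum_mem_eq_finite_toFinset_sum _ hM
    have heMF : e ∈ hM.toFinset := by rw [Set.Finite.mem_toFinset]; exact ⟨heT, heC⟩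
    have hstep1 : mu t c' ≤ ∑ f ∈ (hM.toFinset.erase e) ∪ hD.toFinset, K ^ rank f.1 := by
      rw [hμ']
      refine Finset.sum_le_sum_of_subset ?_
      intro f hf
      rw [Set.Finite.mem_toFinset] at hf
      have := hsubM hf
      obtain ⟨h1, h2⟩ := this
      rw [Set.mem_singleton_iff] at h2
      rcases h1 with h1 | h1
      · exact Finset.mem_union_left _ (Finset.mem_erase.2 ⟨h2, by
          rw [Set.Finite.mem_toFinset]; exact h1⟩)
      · exact Finset.mem_union_right _ (by rw [Set.Finite.mem_toFinset]; exact h1)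
    have hstep2 : ∑ f ∈ (hM.toFinset.erase e) ∪ hD.toFinset, K ^ rank f.1 ≤
        (∑ f ∈ hM.toFinset.erase e, K ^ rank f.1) + ∑ f ∈ hD.toFinset, K ^ rank f.1 := by
      have := Finset.sum_union_inter (s₁ := hM.toFinset.erase e) (s₂ := hD.toFinset)
        (f := fun f => K ^ rank f.1)
      omega
    have hstep3 : (∑ f ∈ hM.toFinset.erase e, K ^ rank f.1) + K ^ rank e.1 = mu t c := by
      rw [hμ]
      exact Finset.sum_erase_add _ _ heMF
    have hrkvrc : rank vrc < rank e.1 := rank_lt hc.1 he1c he1ne hvrc'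
    have hstep4 : ∑ f ∈ hD.toFinset, K ^ rank f.1 ≤
        hD.toFinset.card * K ^ (rank e.1 - 1) := by
      have : ∀ f ∈ hD.toFinset, K ^ rank f.1 ≤ K ^ (rank e.1 - 1) := by
        intro f hf
        rw [Set.Finite.mem_toFinset] at hf
        have hf1 : Reach c.2 vrc f.1 := hf.2.2
        have hcu : cladeUnion f.1 ⊆ cladeUnion vrc := (reach_sub hc.1 hf1 hvrcc hvrcne).2.2
        have hrk : rank f.1 ≤ rank vrc := Set.ncard_le_ncard hcu (cu_finite hc.1 hvrcc)
        exact Nat.pow_le_pow_right (by omega) (by omega)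
      calc ∑ f ∈ hD.toFinset, K ^ rank f.1
          ≤ ∑ _f ∈ hD.toFinset, K ^ (rank e.1 - 1) := Finset.sum_le_sum this
        _ = hD.toFinset.card * K ^ (rank e.1 - 1) := by
            rw [Finset.sum_const, smul_eq_mul]
    have hcard : hD.toFinset.card ≤ t.2.ncard := by
      rw [Set.ncard_eq_toFinset_card _ hFt]
      exact Finset.card_le_card (by
        intro f hf
        rw [Set.Finite.mem_toFinset] at hf ⊢
        exact hf.1)
    set a : ℕ := K ^ (rank e.1 - 1) with hadef
    have hKa : K ^ rank e.1 = K * a := by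
      rw [hadef, ← pow_succ']
      congr 1
      omega
    have ha1 : 1 ≤ a := Nat.one_le_pow _ _ (by omega)
    have hda : hD.toFinset.card * a ≤ t.2.ncard * a := Nat.mul_le_mul_right a hcard
    have hKexp : K * a = t.2.ncard * a + a := by rw [hKdef]; ring
    omega
  exact ⟨c', hswap, hc'V, hc'E, hc'H, hrtc', hmu⟩

end Aux

/-- Lemma `whataredaghistories`: every history in the history sDAG
constructed from `T` is obtained from some history of `T` by a finite sequence of
subhistory swaps with subhistories of histories in `T`. -/
theorem dag_history_from_swaps
    (T : Set (Hist Y)) (hT : ∀ u ∈ T, IsHistory u.1 u.2)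
    (t : Hist Y) (ht : HistoryIn (unionV T) (unionE T) t.1 t.2) :
    ∃ t₁ ∈ T, Relation.ReflTransGen (SwapStepUsing T) t₁ t := by
  obtain ⟨hV, hE, htH⟩ := ht
  obtain ⟨rt, hrt, _⟩ := htH.2.1
  have hrtU : (HNode.ua, rt) ∈ unionE T := hE hrt
  simp only [unionE, Set.mem_iUnion] at hrtU
  obtain ⟨t₁, ht₁T, hrt1⟩ := hrtU
  refine ⟨t₁, ht₁T, ?_⟩
  have ht₁ := hT t₁ ht₁T
  have hmain : ∀ n : ℕ, ∀ c : Hist Y, mu t c < n → c.1 ⊆ unionV T → c.2 ⊆ unionE T →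
      IsHistory c.1 c.2 → (HNode.ua, rt) ∈ c.2 →
      Relation.ReflTransGen (SwapStepUsing T) c t := by
    intro n
    induction n with
    | zero => intro c h; omega
    | succ n ih =>
      intro c hmu hcV hcE hc hrc
      by_cases hsub : t.2 ⊆ c.2
      · obtain ⟨h1, h2⟩ := history_eq_of_subset hc htH hsub
        have hct : c = t := Prod.ext h1 h2
        exact hct ▸ Relation.ReflTransGen.refl
      · obtain ⟨c', hswap, h1, h2, h3, h4, h5⟩ :=
          swap_step hT t htH hE hrt c hcV hcE hc hrc hsub
        exact Relation.ReflTransGen.head hswap (ih c' (by omega) h1 h2 h3 h4)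
  have ht₁V : t₁.1 ⊆ unionV T := fun v hv => Set.mem_biUnion ht₁T hv
  have ht₁E : t₁.2 ⊆ unionE T := fun f hf => Set.mem_biUnion ht₁T hf
  exact hmain (mu t t₁ + 1) t₁ (by omega) ht₁V ht₁E ht₁ hrt1

end HistorySDAGs
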